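/- Let m ≥ 1 and k > m + 1 be integers, and let a_1 < a_2 < ... < a_k be real numbers with a_{i+1} − a_i ≥ √(4 − 6/(m+2)) for all i. Then for every real x_0, max(|x_0 − a_1|, |x_0 − a_k|)² − m² ≥ (m² + 4m + 1)/(2m + 4); in particular max(|x_0 − a_1|, |x_0 − a_k|)² > m². -/
import Mathlib


theorem stmt_18 (m k : ℕ) (hm : 1 ≤ m) (hk : m + 1 < k) (a : ℕ → ℝ)
    (hmono : ∀ i j, 1 ≤ i → i < j → j ≤ k → a i < a j)
    (hgap : ∀ i, 1 ≤ i → i + 1 ≤ k →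
      Real.sqrt (4 - 6 / ((m : ℝ) + 2)) ≤ a (i + 1) - a i)
    (x₀ : ℝ) :
    ((m : ℝ) ^ 2 + 4 * m + 1) / (2 * m + 4) ≤
        max |x₀ - a 1| |x₀ - a k| ^ 2 - (m : ℝ) ^ 2 ∧
      (m : ℝ) ^ 2 < max |x₀ - a 1| |x₀ - a k| ^ 2 := by
  set δ := Real.sqrt (4 - 6 / ((m : ℝ) + 2)) with hδ
  have hm2 : (0:ℝ) < (m:ℝ) + 2 := by positivity
  have harg : (0:ℝ) ≤ 4 - 6 / ((m : ℝ) + 2) := by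
    rw [sub_nonneg, div_le_iff₀ hm2]
    have : (1:ℝ) ≤ (m:ℝ) := by exact_mod_cast hm
    nlinarith
  have hδ0 : 0 ≤ δ := Real.sqrt_nonneg _
  have hδsq : δ ^ 2 = 4 - 6 / ((m : ℝ) + 2) := Real.sq_sqrt harg
  -- a (1+n) - a 1 ≥ n * δ
  have key : ∀ n : ℕ, 1 + n ≤ k → (n : ℝ) * δ ≤ a (1 + n) - a 1 := by
    intro n
    induction n with
    | zero => intro _; simp
    | succ n ih =>
      intro hle
      have h1 : 1 + n ≤ k := by omega
      have h2 := ih h1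
      have h3 := hgap (1 + n) (by omega) (by omega)
      have : a (1 + n) + δ ≤ a (1 + n + 1) := by linarith
      push_cast
      have : (1 + (n:ℕ)) + 1 = 1 + (n + 1) := by omega
      rw [← this]
      push_cast
      linarith [hgap (1 + n) (by omega) (by omega), ih h1]
  have hkk : 1 + (k - 1) = k := by omega
  have hgapsum : ((k - 1 : ℕ) : ℝ) * δ ≤ a k - a 1 := by
    have := key (k - 1) (by omega); rwa [hkk] at this
  set M := max |x₀ - a 1| |x₀ - a k| with hM
  have hM0 : 0 ≤ M := le_trans (abs_nonneg _) (le_max_left _ _)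
  have htri : a k - a 1 ≤ |x₀ - a 1| + |x₀ - a k| := by
    have h1 := le_abs_self (x₀ - a 1)
    have h2 := neg_abs_le (x₀ - a k)
    linarith
  have hMsum : a k - a 1 ≤ 2 * M := by
    have := le_max_left |x₀ - a 1| |x₀ - a k|
    have := le_max_right |x₀ - a 1| |x₀ - a k|
    simp only [hM]; linarith
  have hkm : ((m : ℝ) + 1) ≤ ((k - 1 : ℕ) : ℝ) := by
    have : (m + 1 : ℕ) ≤ k - 1 := by omega
    exact_mod_cast this
  have hlow : ((m : ℝ) + 1) * δ ≤ 2 * M :=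
    le_trans (mul_le_mul_of_nonneg_right hkm hδ0) (le_trans hgapsum hMsum)
  have hsq : ((m : ℝ) + 1) ^ 2 * (4 - 6 / ((m : ℝ) + 2)) ≤ 4 * M ^ 2 := by
    have h1 : (((m : ℝ) + 1) * δ) ^ 2 ≤ (2 * M) ^ 2 := by
      apply pow_le_pow_left₀ (by positivity) hlow
    calc ((m : ℝ) + 1) ^ 2 * (4 - 6 / ((m : ℝ) + 2)) = (((m : ℝ) + 1) * δ) ^ 2 := by
          rw [mul_pow, hδsq]
      _ ≤ (2 * M) ^ 2 := h1
      _ = 4 * M ^ 2 := by ring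
  have hid : ((m : ℝ) + 1) ^ 2 * (4 - 6 / ((m : ℝ) + 2)) / 4 - (m : ℝ) ^ 2
      = ((m : ℝ) ^ 2 + 4 * m + 1) / (2 * m + 4) := by
    field_simp
    ring
  have hmain : ((m : ℝ) ^ 2 + 4 * m + 1) / (2 * m + 4) ≤ M ^ 2 - (m : ℝ) ^ 2 := by
    rw [← hid]; linarith
  have hpos : (0:ℝ) < ((m : ℝ) ^ 2 + 4 * m + 1) / (2 * m + 4) := by positivity
  exact ⟨hmain, by linarith⟩
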